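/- Let s = p/q be a rational number in lowest terms with q > 0, and let (a_n) be a sequence of rational numbers. Then the sequence (a_n/(n!)^s) satisfies condition (G)_conj (i.e., there is C > 0 with |a_n|/(n!)^s ≤ C^n for all n) if and only if the sequence (a_n/(⌊n/q⌋!)^p) satisfies (G)_conj (i.e., there is C' > 0 with |a_n|/(⌊n/q⌋!)^p ≤ C'^n for all n). -/

import Mathlib

lemma facA (m : ℕ) : ∀ q : ℕ, (m.factorial)^q ∣ (m*q).factorial := by
  intro q
  induction q with
  | zero => simp
  | succ k ih =>
      rw [pow_succ, Nat.mul_succ]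
      exact dvd_trans (mul_dvd_mul ih dvd_rfl)
        (Nat.factorial_mul_factorial_dvd_factorial_add _ _)

lemma fac_add_le (a : ℕ) : ∀ b : ℕ, (a+b).factorial ≤ a.factorial * (a+b)^b := by
  intro b
  induction b with
  | zero => simp
  | succ k ih =>
      have h1 : (a + (k+1)).factorial = (a+k+1) * (a+k).factorial := by
        rw [show a + (k+1) = (a+k)+1 by ring, Nat.factorial_succ]
      rw [h1]
      calc (a+k+1) * (a+k).factorial ≤ (a+k+1) * (a.factorial * (a+k)^k) :=
            Nat.mul_le_mul_left _ ih
        _ ≤ (a+k+1) * (a.factorial * (a+k+1)^k) := by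
            exact Nat.mul_le_mul_left _ (Nat.mul_le_mul_left _
              (Nat.pow_le_pow_left (by omega) k))
        _ = a.factorial * (a+(k+1))^(k+1) := by ring_nf

lemma facB (q : ℕ) : ∀ m : ℕ, (m*q).factorial ≤ (m.factorial)^q * q^(m*q) := by
  intro m
  induction m with
  | zero => simp
  | succ k ih =>
      have h1 : ((k+1)*q).factorial ≤ (k*q).factorial * ((k+1)*q)^q := by
        have := fac_add_le (k*q) q
        rwa [show k*q + q = (k+1)*q by ring] at this
      have e : ((k+1)*q)^q = (k+1)^q * q^q := mul_pow _ _ _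
      calc ((k+1)*q).factorial ≤ (k*q).factorial * ((k+1)*q)^q := h1
        _ ≤ ((k.factorial)^q * q^(k*q)) * ((k+1)^q * q^q) := by
            rw [← e]; exact Nat.mul_le_mul_right _ ih
        _ = ((k+1)^q * (k.factorial)^q) * (q^(k*q) * q^q) := by ring
        _ = ((k+1).factorial)^q * q^((k+1)*q) := by
            rw [← mul_pow, ← pow_add, ← Nat.factorial_succ,
              show k*q+q = (k+1)*q by ring]

lemma facMain (q : ℕ) (hq : 0 < q) (n : ℕ) :
    n.factorial ≤ (2*q^(q+1))^n * ((n/q).factorial)^q := by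
  rcases Nat.eq_zero_or_pos n with rfl | hn
  · simp
  set m := n / q with hm
  have hmq : m * q ≤ n := Nat.div_mul_le_self n q
  have hn1 : n ≤ (m+1)*q := by
    have h := Nat.div_add_mod n q
    rw [← hm] at h
    have h2 := Nat.mod_lt n hq
    have h3 : (m+1)*q = q*m + q := by ring
    omega
  have h1 : n.factorial ≤ ((m+1)*q).factorial := Nat.factorial_le hn1
  have h2 : ((m+1)*q).factorial ≤ ((m+1).factorial)^q * q^((m+1)*q) := facB q (m+1)
  have h3 : (m+1).factorial ≤ 2^m * m.factorial := by
    rw [Nat.factorial_succ]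
    exact Nat.mul_le_mul_right _ (Nat.lt_two_pow_self (n := m))
  have h4 : ((m+1).factorial)^q ≤ 2^(m*q) * (m.factorial)^q := by
    calc ((m+1).factorial)^q ≤ (2^m * m.factorial)^q := Nat.pow_le_pow_left h3 q
      _ = 2^(m*q) * (m.factorial)^q := by rw [mul_pow, ← pow_mul]
  have key : n.factorial ≤ 2^(m*q) * q^(m*q+q) * (m.factorial)^q := by
    calc n.factorial ≤ ((m+1).factorial)^q * q^((m+1)*q) := le_trans h1 h2
      _ ≤ (2^(m*q) * (m.factorial)^q) * q^((m+1)*q) := Nat.mul_le_mul_right _ h4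
      _ = 2^(m*q) * q^(m*q+q) * (m.factorial)^q := by
          rw [show (m+1)*q = m*q+q by ring]; ring
  refine le_trans key ?_
  have e1 : 2^(m*q) ≤ 2^n := Nat.pow_le_pow_right (by norm_num) hmq
  have e2 : q^(m*q+q) ≤ q^(n + q*n) := Nat.pow_le_pow_right hq (by nlinarith)
  calc 2^(m*q) * q^(m*q+q) * (m.factorial)^q
      ≤ 2^n * q^(n+q*n) * (m.factorial)^q :=
        Nat.mul_le_mul_right _ (Nat.mul_le_mul e1 e2)
    _ = (2*q^(q+1))^n * (m.factorial)^q := by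
        rw [mul_pow, ← pow_mul, show (q+1)*n = n + q*n by ring, pow_add]



lemma rL1 (q n : ℕ) (hq : 0 < q) :
    (((n/q).factorial : ℕ) : ℝ) ≤ (n.factorial : ℝ) ^ ((1:ℝ)/(q:ℝ)) := by
  set m := n / q
  have hd : (m.factorial)^q ≤ n.factorial := by
    refine le_trans (Nat.le_of_dvd (Nat.factorial_pos _) (facA m q)) ?_
    exact Nat.factorial_le (Nat.div_mul_le_self n q)
  have h1 : ((m.factorial : ℝ))^(q:ℕ) ≤ (n.factorial : ℝ) := by
    exact_mod_cast hd
  have hq' : (q:ℝ) ≠ 0 := Nat.cast_ne_zero.mpr hq.ne'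
  have e : ((m.factorial : ℝ))^(q:ℕ) = ((m.factorial : ℝ)) ^ ((q:ℕ):ℝ) :=
    (Real.rpow_natCast _ _).symm
  calc ((m.factorial : ℕ):ℝ)
      = (((m.factorial : ℝ)) ^ ((q:ℕ):ℝ)) ^ ((1:ℝ)/q) := by
        rw [← Real.rpow_mul (by positivity), mul_one_div, div_self hq', Real.rpow_one]
    _ ≤ (n.factorial : ℝ) ^ ((1:ℝ)/q) := by
        refine Real.rpow_le_rpow (by positivity) ?_ (by positivity)
        rw [← e]; exact h1

lemma rL2 (q n : ℕ) (hq : 0 < q) :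
    (n.factorial : ℝ) ^ ((1:ℝ)/(q:ℝ)) ≤
      (((2*q^(q+1) : ℕ)):ℝ)^n * (((n/q).factorial : ℕ) : ℝ) := by
  set m := n / q
  set B : ℝ := (((2*q^(q+1) : ℕ)):ℝ) with hB
  have hB1 : 1 ≤ B := by
    rw [hB]
    have : (0:ℕ) < 2*q^(q+1) := by positivity
    exact_mod_cast this
  have hq' : (q:ℝ) ≠ 0 := Nat.cast_ne_zero.mpr hq.ne'
  have h1 : (n.factorial : ℝ) ≤ B^n * ((m.factorial : ℝ))^(q:ℕ) := by
    have := facMain q hq n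
    calc (n.factorial : ℝ) ≤ (((2*q^(q+1))^n * (m.factorial)^q : ℕ) : ℝ) := by
          exact_mod_cast this
      _ = B^n * ((m.factorial : ℝ))^(q:ℕ) := by rw [hB]; push_cast; ring
  calc (n.factorial : ℝ) ^ ((1:ℝ)/q)
      ≤ (B^n * ((m.factorial : ℝ))^(q:ℕ)) ^ ((1:ℝ)/q) :=
        Real.rpow_le_rpow (by positivity) h1 (by positivity)
    _ = (B^n) ^ ((1:ℝ)/q) * (((m.factorial : ℝ))^(q:ℕ)) ^ ((1:ℝ)/q) :=
        Real.mul_rpow (by positivity) (by positivity)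
    _ ≤ B^n * (m.factorial : ℝ) := by
        refine mul_le_mul ?_ ?_ (by positivity) (by positivity)
        · calc (B^n) ^ ((1:ℝ)/q) ≤ (B^n) ^ (1:ℝ) := by
                refine Real.rpow_le_rpow_of_exponent_le (one_le_pow₀ hB1) ?_
                rw [div_le_one (by exact_mod_cast hq)]
                exact_mod_cast hq
            _ = B^n := Real.rpow_one _
        · rw [← Real.rpow_natCast ((m.factorial : ℝ)) q,
            ← Real.rpow_mul (by positivity), mul_one_div, div_self hq', Real.rpow_one]

lemma keyZ (u v E : ℝ) (hu : 0 < u) (hv : 0 < v) (hE : 1 ≤ E) (n : ℕ) (p : ℤ)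
    (h1 : u ≤ E^n * v) (h2 : v ≤ E^n * u) :
    u ^ p ≤ (E ^ p.natAbs)^n * v ^ p := by
  rcases le_or_gt 0 p with hp | hp
  · lift p to ℕ using hp with k
    rw [Int.natAbs_natCast, zpow_natCast, zpow_natCast]
    calc u^k ≤ (E^n * v)^k := pow_le_pow_left₀ hu.le h1 k
      _ = (E^k)^n * v^k := by rw [mul_pow, ← pow_mul, ← pow_mul, Nat.mul_comm]
  · obtain ⟨k, hk⟩ : ∃ k : ℕ, p = -(k:ℤ) := ⟨p.natAbs, by omega⟩
    have hkabs : p.natAbs = k := by omega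
    subst hk
    rw [hkabs, zpow_neg, zpow_neg, zpow_natCast, zpow_natCast]
    have h : v^k ≤ (E^k)^n * u^k := by
      calc v^k ≤ (E^n * u)^k := pow_le_pow_left₀ hv.le h2 k
        _ = (E^k)^n * u^k := by rw [mul_pow, ← pow_mul, ← pow_mul, Nat.mul_comm]
    rw [inv_eq_one_div, inv_eq_one_div, mul_one_div,
      div_le_div_iff₀ (pow_pos hu k) (pow_pos hv k), one_mul]
    exact h

lemma transfer (X Y : ℕ → ℝ) (hX : ∀ n, 0 < X n) (hY : ∀ n, 0 < Y n) (D : ℝ)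
    (hD : 1 ≤ D) (h : ∀ n, X n ≤ D^n * Y n) (a : ℕ → ℚ)
    (hex : ∃ C : ℝ, 0 < C ∧ ∀ n, |(a n : ℝ)| / X n ≤ C^n) :
    ∃ C' : ℝ, 0 < C' ∧ ∀ n, |(a n : ℝ)| / Y n ≤ C'^n := by
  obtain ⟨C, hC, hCn⟩ := hex
  have hD0 : (0:ℝ) < D := lt_of_lt_of_le one_pos hD
  refine ⟨C*D, by positivity, fun n => ?_⟩
  have h1 : |(a n : ℝ)| / Y n ≤ (|(a n : ℝ)| * D^n) / X n := by
    rw [div_le_div_iff₀ (hY n) (hX n)]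
    nlinarith [mul_le_mul_of_nonneg_left (h n) (abs_nonneg ((a n : ℝ))),
      (hY n), pow_pos hD0 n]
  calc |(a n : ℝ)| / Y n ≤ (|(a n : ℝ)| * D^n) / X n := h1
    _ = (|(a n : ℝ)| / X n) * D^n := by ring
    _ ≤ C^n * D^n := mul_le_mul_of_nonneg_right (hCn n) (by positivity)
    _ = (C*D)^n := (mul_pow _ _ _).symm


/-- Let `s = p/q` in lowest terms with `q > 0`.  A sequence `(aₙ)` of rationals satisfies
`(G)_conj` for `aₙ/(n!)^s` iff it satisfies `(G)_conj` for `aₙ/(⌊n/q⌋!)^p`. -/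
theorem Gconj_factorial_rpow_iff (p : ℤ) (q : ℕ) (hq : 0 < q)
    (hcop : Int.gcd p q = 1) (a : ℕ → ℚ) :
    (∃ C : ℝ, 0 < C ∧ ∀ n : ℕ,
        |(a n : ℝ)| / ((n.factorial : ℝ) ^ ((p : ℝ) / (q : ℝ))) ≤ C ^ n) ↔
      (∃ C' : ℝ, 0 < C' ∧ ∀ n : ℕ,
        |(a n : ℝ)| / (((n / q).factorial : ℝ) ^ (p : ℝ)) ≤ C' ^ n) := by
  set F : ℕ → ℝ := fun n => (n.factorial : ℝ) ^ ((1:ℝ)/(q:ℝ)) with hF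
  set M : ℕ → ℝ := fun n => (((n/q).factorial : ℕ) : ℝ) with hM
  set E : ℝ := (((2*q^(q+1) : ℕ)):ℝ) with hE
  have hE1 : 1 ≤ E := by
    rw [hE]
    have h0 : (0:ℕ) < 2*q^(q+1) := by positivity
    exact_mod_cast h0
  have hFpos : ∀ n, 0 < F n := fun n => by
    rw [hF]; positivity
  have hMpos : ∀ n, 0 < M n := fun n => by
    simp only [hM]; exact_mod_cast Nat.factorial_pos _
  have hFM : ∀ n, F n ≤ E^n * M n := fun n => rL2 q n hq
  have hMF : ∀ n, M n ≤ E^n * F n := fun n =>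
    le_trans (rL1 q n hq) (le_mul_of_one_le_left (hFpos n).le (one_le_pow₀ hE1))
  set D : ℝ := E ^ p.natAbs with hD
  have hD1 : 1 ≤ D := one_le_pow₀ hE1
  have hXY : ∀ n, F n ^ p ≤ D^n * M n ^ p := fun n =>
    keyZ (F n) (M n) E (hFpos n) (hMpos n) hE1 n p (hFM n) (hMF n)
  have hYX : ∀ n, M n ^ p ≤ D^n * F n ^ p := fun n =>
    keyZ (M n) (F n) E (hMpos n) (hFpos n) hE1 n p (hMF n) (hFM n)
  have eq1 : ∀ n : ℕ, (n.factorial : ℝ) ^ ((p : ℝ) / (q : ℝ)) = F n ^ p := by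
    intro n
    rw [hF, show (p:ℝ)/(q:ℝ) = (1/(q:ℝ))*(p:ℤ) by push_cast; ring]
    rw [Real.rpow_mul (by positivity), Real.rpow_intCast]
  have eq2 : ∀ n : ℕ, (((n/q).factorial : ℕ) : ℝ) ^ ((p : ℝ)) = M n ^ p := fun n =>
    Real.rpow_intCast _ _
  simp only [eq1, eq2]
  constructor
  · exact transfer (fun n => F n ^ p) (fun n => M n ^ p)
      (fun n => zpow_pos (hFpos n) p) (fun n => zpow_pos (hMpos n) p) D hD1 hXY a
  · exact transfer (fun n => M n ^ p) (fun n => F n ^ p)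
      (fun n => zpow_pos (hMpos n) p) (fun n => zpow_pos (hFpos n) p) D hD1 hYX a
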